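/- Let E₀ᵃ(f) = Σ_n a(n)|f̂(n)|² and E₁ᵃ(f) = Σ_{ξ₁+ξ₂+ξ₃+ξ₄=0} b₄ᵃ(ξ₁,ξ₂,ξ₃,ξ₄) sgn(ξ₁₂) f̂(ξ₁) conj(f̂)(-ξ₂) f̂(ξ₃) conj(f̂)(-ξ₄), where |b₄ᵃ(ξ₁,ξ₂,ξ₃,ξ₄)| ≲ a(N₁*)/N₁* on dyadic blocks with N₁* the largest of the four dyadic frequencies (and the largest two comparable). Then |E₁ᵃ(f)| ≲ ‖f‖_{L²}² · E₀ᵃ(f) for all f ∈ L²(𝕋) with E₀ᵃ(f) < ∞. -/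

import Mathlib

open ENNReal

private def s1 (p : ℤ × ℤ × ℤ) : ℤ := p.1
private def s2 (p : ℤ × ℤ × ℤ) : ℤ := -p.2.1
private def s3 (p : ℤ × ℤ × ℤ) : ℤ := p.2.2
private def s4 (p : ℤ × ℤ × ℤ) : ℤ := p.1 + p.2.1 + p.2.2
private def Nz (p : ℤ × ℤ × ℤ) : ℤ :=
  max 1 (max |p.1| (max |p.2.1| (max |p.2.2| |p.1 + p.2.1 + p.2.2|)))

private lemma one_le_Nz (p : ℤ × ℤ × ℤ) : 1 ≤ Nz p := le_max_left _ _

private lemma abs_s1_le (p : ℤ × ℤ × ℤ) : |s1 p| ≤ Nz p :=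
  le_trans (le_max_left _ _) (le_max_right _ _)

private lemma abs_s2_le (p : ℤ × ℤ × ℤ) : |s2 p| ≤ Nz p := by
  simp only [s2, Nz, abs_neg]
  exact le_trans (le_trans (le_max_left _ _) (le_max_right _ _)) (le_max_right _ _)

private lemma abs_s3_le (p : ℤ × ℤ × ℤ) : |s3 p| ≤ Nz p := by
  have h1 : |p.2.2| ≤ max |p.2.2| |p.1 + p.2.1 + p.2.2| := le_max_left _ _
  have h2 : max |p.2.2| |p.1 + p.2.1 + p.2.2| ≤ max |p.2.1| (max |p.2.2| |p.1 + p.2.1 + p.2.2|) := le_max_right _ _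
  have h3 : max |p.2.1| (max |p.2.2| |p.1 + p.2.1 + p.2.2|) ≤ max |p.1| (max |p.2.1| (max |p.2.2| |p.1 + p.2.1 + p.2.2|)) := le_max_right _ _
  have h4 : max |p.1| (max |p.2.1| (max |p.2.2| |p.1 + p.2.1 + p.2.2|)) ≤ Nz p := le_max_right _ _
  exact le_trans h1 (le_trans h2 (le_trans h3 h4))

private lemma abs_s4_le (p : ℤ × ℤ × ℤ) : |s4 p| ≤ Nz p := by
  have h1 : |p.1 + p.2.1 + p.2.2| ≤ max |p.2.2| |p.1 + p.2.1 + p.2.2| := le_max_right _ _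
  have h2 : max |p.2.2| |p.1 + p.2.1 + p.2.2| ≤ max |p.2.1| (max |p.2.2| |p.1 + p.2.1 + p.2.2|) := le_max_right _ _
  have h3 : max |p.2.1| (max |p.2.2| |p.1 + p.2.1 + p.2.2|) ≤ max |p.1| (max |p.2.1| (max |p.2.2| |p.1 + p.2.1 + p.2.2|)) := le_max_right _ _
  have h4 : max |p.1| (max |p.2.1| (max |p.2.2| |p.1 + p.2.1 + p.2.2|)) ≤ Nz p := le_max_right _ _
  exact le_trans h1 (le_trans h2 (le_trans h3 h4))

private lemma Nz_cases (p : ℤ × ℤ × ℤ) :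
    Nz p ≤ 1 ∨ Nz p ≤ |s1 p| ∨ Nz p ≤ |s2 p| ∨ Nz p ≤ |s3 p| ∨ Nz p ≤ |s4 p| := by
  simp only [Nz, s1, s2, s3, s4, abs_neg]
  rcases max_choice 1 (max |p.1| (max |p.2.1| (max |p.2.2| |p.1 + p.2.1 + p.2.2|))) with h | h
  · exact Or.inl h.le
  · rw [h]
    rcases max_choice |p.1| (max |p.2.1| (max |p.2.2| |p.1 + p.2.1 + p.2.2|)) with h2 | h2
    · exact Or.inr (Or.inl h2.le)
    · rw [h2]
      rcases max_choice |p.2.1| (max |p.2.2| |p.1 + p.2.1 + p.2.2|) with h3 | h3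
      · exact Or.inr (Or.inr (Or.inl h3.le))
      · rw [h3]
        rcases max_choice |p.2.2| |p.1 + p.2.1 + p.2.2| with h4 | h4
        · exact Or.inr (Or.inr (Or.inr (Or.inl h4.le)))
        · rw [h4]
          exact Or.inr (Or.inr (Or.inr (Or.inr le_rfl)))

private lemma abs3 (x y z w : ℤ) (h : x = y - z + w) : |x| ≤ |y| + |z| + |w| := by
  subst h
  calc |y - z + w| ≤ |y - z| + |w| := abs_add_le _ _
  _ ≤ |y| + |z| + |w| := by
      have : |y - z| ≤ |y| + |z| := by
        simpa [sub_eq_add_neg, abs_neg] using abs_add_le y (-z)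
      linarith

private lemma rel1 (p : ℤ × ℤ × ℤ) : s1 p = s2 p - s3 p + s4 p := by
  simp only [s1, s2, s3, s4]; ring
private lemma rel2 (p : ℤ × ℤ × ℤ) : s2 p = s1 p - s4 p + s3 p := by
  simp only [s1, s2, s3, s4]; ring
private lemma rel3 (p : ℤ × ℤ × ℤ) : s3 p = s2 p - s1 p + s4 p := by
  simp only [s1, s2, s3, s4]; ring
private lemma rel4 (p : ℤ × ℤ × ℤ) : s4 p = s1 p - s2 p + s3 p := by
  simp only [s1, s2, s3, s4]; ring

set_option maxHeartbeats 4000000 in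
private lemma pick_pair (m1 m2 m3 m4 N : ℤ)
    (e1 : m1 ≤ m2 + m3 + m4) (e2 : m2 ≤ m1 + m3 + m4)
    (e3 : m3 ≤ m1 + m2 + m4) (e4 : m4 ≤ m1 + m2 + m3)
    (h1 : 0 ≤ m1) (h2 : 0 ≤ m2) (h3 : 0 ≤ m3) (h4 : 0 ≤ m4)
    (hg : N ≤ 1 ∨ N ≤ m1 ∨ N ≤ m2 ∨ N ≤ m3 ∨ N ≤ m4) :
    (m4 ≤ m1 ∧ m3 ≤ m2 ∧ (N ≤ 3 ∨ (N ≤ 3*m1 ∧ N ≤ 3*m2))) ∨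
    (m4 ≤ m1 ∧ m2 ≤ m3 ∧ (N ≤ 3 ∨ (N ≤ 3*m1 ∧ N ≤ 3*m3))) ∨
    (m3 ≤ m1 ∧ m2 ≤ m4 ∧ (N ≤ 3 ∨ (N ≤ 3*m1 ∧ N ≤ 3*m4))) ∨
    (m4 ≤ m2 ∧ m1 ≤ m3 ∧ (N ≤ 3 ∨ (N ≤ 3*m2 ∧ N ≤ 3*m3))) ∨
    (m3 ≤ m2 ∧ m1 ≤ m4 ∧ (N ≤ 3 ∨ (N ≤ 3*m2 ∧ N ≤ 3*m4))) ∨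
    (m2 ≤ m3 ∧ m1 ≤ m4 ∧ (N ≤ 3 ∨ (N ≤ 3*m3 ∧ N ≤ 3*m4))) := by omega

private lemma inj_triple (u v w : ℤ × ℤ × ℤ → ℤ)
    (h : ∀ p q : ℤ × ℤ × ℤ, u p = u q → v p = v q → w p = w q → p = q) :
    Function.Injective (fun p => (u p, v p, w p)) := by
  intro p q hpq
  simp only [Prod.mk.injEq] at hpq
  exact h p q hpq.1 hpq.2.1 hpq.2.2

private lemma inj134 : Function.Injective (fun p => (s1 p, s3 p, s4 p)) := by
  apply inj_triple
  rintro ⟨x, y, z⟩ ⟨x', y', z'⟩ h1 h2 h3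
  simp only [s1, s3, s4] at h1 h2 h3
  simp only [Prod.mk.injEq]
  omega

private lemma inj243 : Function.Injective (fun p => (s2 p, s4 p, s3 p)) := by
  apply inj_triple
  rintro ⟨x, y, z⟩ ⟨x', y', z'⟩ h1 h2 h3
  simp only [s2, s3, s4] at h1 h2 h3
  simp only [Prod.mk.injEq]
  omega

private lemma inj124 : Function.Injective (fun p => (s1 p, s2 p, s4 p)) := by
  apply inj_triple
  rintro ⟨x, y, z⟩ ⟨x', y', z'⟩ h1 h2 h3
  simp only [s1, s2, s4] at h1 h2 h3
  simp only [Prod.mk.injEq]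
  omega

private lemma inj342 : Function.Injective (fun p => (s3 p, s4 p, s2 p)) := by
  apply inj_triple
  rintro ⟨x, y, z⟩ ⟨x', y', z'⟩ h1 h2 h3
  simp only [s2, s3, s4] at h1 h2 h3
  simp only [Prod.mk.injEq]
  omega

private lemma inj123 : Function.Injective (fun p => (s1 p, s2 p, s3 p)) := by
  apply inj_triple
  rintro ⟨x, y, z⟩ ⟨x', y', z'⟩ h1 h2 h3
  simp only [s1, s2, s3] at h1 h2 h3
  simp only [Prod.mk.injEq]
  omega

private lemma inj432 : Function.Injective (fun p => (s4 p, s3 p, s2 p)) := by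
  apply inj_triple
  rintro ⟨x, y, z⟩ ⟨x', y', z'⟩ h1 h2 h3
  simp only [s2, s3, s4] at h1 h2 h3
  simp only [Prod.mk.injEq]
  omega

private lemma inj214 : Function.Injective (fun p => (s2 p, s1 p, s4 p)) := by
  apply inj_triple
  rintro ⟨x, y, z⟩ ⟨x', y', z'⟩ h1 h2 h3
  simp only [s1, s2, s4] at h1 h2 h3
  simp only [Prod.mk.injEq]
  omega

private lemma inj341 : Function.Injective (fun p => (s3 p, s4 p, s1 p)) := by
  apply inj_triple
  rintro ⟨x, y, z⟩ ⟨x', y', z'⟩ h1 h2 h3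
  simp only [s1, s3, s4] at h1 h2 h3
  simp only [Prod.mk.injEq]
  omega

private lemma inj213 : Function.Injective (fun p => (s2 p, s1 p, s3 p)) := by
  apply inj_triple
  rintro ⟨x, y, z⟩ ⟨x', y', z'⟩ h1 h2 h3
  simp only [s1, s2, s3] at h1 h2 h3
  simp only [Prod.mk.injEq]
  omega

private lemma inj431 : Function.Injective (fun p => (s4 p, s3 p, s1 p)) := by
  apply inj_triple
  rintro ⟨x, y, z⟩ ⟨x', y', z'⟩ h1 h2 h3
  simp only [s1, s3, s4] at h1 h2 h3
  simp only [Prod.mk.injEq]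
  omega

private lemma inj312 : Function.Injective (fun p => (s3 p, s1 p, s2 p)) := by
  apply inj_triple
  rintro ⟨x, y, z⟩ ⟨x', y', z'⟩ h1 h2 h3
  simp only [s1, s2, s3] at h1 h2 h3
  simp only [Prod.mk.injEq]
  omega

private lemma inj421 : Function.Injective (fun p => (s4 p, s2 p, s1 p)) := by
  apply inj_triple
  rintro ⟨x, y, z⟩ ⟨x', y', z'⟩ h1 h2 h3
  simp only [s1, s2, s4] at h1 h2 h3
  simp only [Prod.mk.injEq]
  omega

private lemma count_le (M : ℤ) (hM : 0 ≤ M) :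
    (∑' w : ℤ, if |w| ≤ M then (ENNReal.ofReal (max 1 (M : ℝ)))⁻¹ else 0) ≤ 3 := by
  set r := (ENNReal.ofReal (max 1 (M : ℝ)))⁻¹ with hr
  have hsupp : ∀ w ∉ Finset.Icc (-M) M, (if |w| ≤ M then r else 0) = 0 := by
    intro w hw
    simp only [Finset.mem_Icc] at hw
    rw [if_neg (by rw [abs_le]; omega)]
  rw [tsum_eq_sum hsupp]
  have hval : ∀ w ∈ Finset.Icc (-M) M, (if |w| ≤ M then r else 0) = r := by
    intro w hw
    simp only [Finset.mem_Icc] at hw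
    rw [if_pos (abs_le.mpr (by omega))]
  rw [Finset.sum_congr rfl hval, Finset.sum_const, Int.card_Icc]
  have hcard : (((M + 1 - -M).toNat : ℕ) : ℝ≥0∞) ≤ ENNReal.ofReal (3 * max 1 (M : ℝ)) := by
    rw [← ENNReal.ofReal_natCast]
    apply ENNReal.ofReal_le_ofReal
    have h1 : (((M + 1 - -M).toNat : ℕ) : ℝ) = 2 * (M : ℝ) + 1 := by
      have ht : ((M + 1 - -M).toNat : ℤ) = 2 * M + 1 := by
        rw [Int.toNat_of_nonneg (by omega)]; ring
      have h2 : (((M + 1 - -M).toNat : ℤ) : ℝ) = ((2 * M + 1 : ℤ) : ℝ) := by rw [ht]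
      push_cast at h2 ⊢
      linarith
    rw [h1]
    rcases le_or_gt 1 (M : ℝ) with h | h
    · rw [max_eq_right h]; linarith
    · have hM0 : (M : ℝ) = 0 := by
        have : M = 0 := by
          by_contra hne
          have : (1 : ℤ) ≤ M := by omega
          have : (1 : ℝ) ≤ (M : ℝ) := by exact_mod_cast this
          linarith
        rw [this]; norm_num
      rw [hM0, max_eq_left (by norm_num)]
      norm_num
  have hne0 : ENNReal.ofReal (max 1 (M : ℝ)) ≠ 0 := by
    refine (ENNReal.ofReal_pos.mpr ?_).ne'
    exact lt_of_lt_of_le one_pos (le_max_left _ _)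
  calc (M + 1 - -M).toNat • r = (((M + 1 - -M).toNat : ℕ) : ℝ≥0∞) * r := nsmul_eq_mul _ _
  _ ≤ ENNReal.ofReal (3 * max 1 (M : ℝ)) * r := mul_le_mul_left hcard r
  _ = 3 * (ENNReal.ofReal (max 1 (M : ℝ)) * r) := by
      rw [ENNReal.ofReal_mul (by norm_num), mul_assoc]
      norm_num
  _ = 3 := by
      rw [hr, ENNReal.mul_inv_cancel hne0 ENNReal.ofReal_ne_top, mul_one]

private lemma pair_core {a : ℝ → ℝ} (ha_pos : ∀ ξ, 0 < a ξ) (ha_mono : MonotoneOn a (Set.Ici 0))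
    {C₁ : ℝ} (hC₁ : 0 ≤ C₁) (ha_doub : ∀ ξ : ℝ, 0 < ξ → a (2 * ξ) ≤ C₁ * a ξ)
    {C₂ : ℝ} (hC₂ : 0 ≤ C₂)
    {N Mi Mj : ℝ} (hN1 : 1 ≤ N) (hMi : 1 ≤ Mi) (hMj : 1 ≤ Mj)
    (hQ : N ≤ 3 ∨ (N ≤ 3 * Mi ∧ N ≤ 3 * Mj))
    {Di Dj Dk Dl : ℝ} (hDi : 0 ≤ Di) (hDj : 0 ≤ Dj) (hDk : 0 ≤ Dk) (hDl : 0 ≤ Dl) :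
    C₂ * a N / N * (Di * Dj * Dk * Dl) ≤
      C₂ * C₁ ^ 2 / 2 * (a Mi * Di ^ 2 * Dk ^ 2 / N + a Mj * Dj ^ 2 * Dl ^ 2 / N) := by
  set K := min Mi Mj with hK
  have hK1 : 1 ≤ K := le_min hMi hMj
  have hNK : N ≤ 3 * K := by
    rcases hQ with h | ⟨h1, h2⟩
    · linarith
    · rcases min_cases Mi Mj with ⟨hm, _⟩ | ⟨hm, _⟩ <;> rw [hK, hm] <;> linarith
  have hNpos : (0 : ℝ) < N := by linarith
  have haN : a N ≤ C₁ ^ 2 * a K := by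
    have h1 : a N ≤ a (2 * (2 * K)) :=
      ha_mono (Set.mem_Ici.mpr (by linarith)) (Set.mem_Ici.mpr (by linarith)) (by linarith)
    have h2 := ha_doub (2 * K) (by linarith)
    have h3 := ha_doub K (by linarith)
    have h4 : C₁ * a (2 * K) ≤ C₁ * (C₁ * a K) := mul_le_mul_of_nonneg_left h3 hC₁
    nlinarith
  have hKMi : a K ≤ a Mi :=
    ha_mono (Set.mem_Ici.mpr (by linarith)) (Set.mem_Ici.mpr (by linarith)) (min_le_left _ _)
  have hKMj : a K ≤ a Mj :=
    ha_mono (Set.mem_Ici.mpr (by linarith)) (Set.mem_Ici.mpr (by linarith)) (min_le_right _ _)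
  have hKpos := ha_pos K
  have hh : a K * (Di * Dj * Dk * Dl) * 2 ≤ a Mi * Di ^ 2 * Dk ^ 2 + a Mj * Dj ^ 2 * Dl ^ 2 := by
    nlinarith [mul_nonneg (sub_nonneg.2 hKMi) (sq_nonneg (Di * Dk)),
      mul_nonneg (sub_nonneg.2 hKMj) (sq_nonneg (Dj * Dl)),
      mul_nonneg hKpos.le (sq_nonneg (Di * Dk - Dj * Dl))]
  have hP : 0 ≤ Di * Dj * Dk * Dl := by positivity
  have key : C₂ * a N * (Di * Dj * Dk * Dl) ≤
      C₂ * C₁ ^ 2 / 2 * (a Mi * Di ^ 2 * Dk ^ 2 + a Mj * Dj ^ 2 * Dl ^ 2) := by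
    have t1 : C₂ * a N * (Di * Dj * Dk * Dl) ≤ C₂ * (C₁ ^ 2 * a K) * (Di * Dj * Dk * Dl) :=
      mul_le_mul_of_nonneg_right (mul_le_mul_of_nonneg_left haN hC₂) hP
    have t2 : C₂ * (C₁ ^ 2 * a K) * (Di * Dj * Dk * Dl) =
        C₂ * C₁ ^ 2 / 2 * (2 * (a K * (Di * Dj * Dk * Dl))) := by ring
    have t3 : C₂ * C₁ ^ 2 / 2 * (2 * (a K * (Di * Dj * Dk * Dl))) ≤
        C₂ * C₁ ^ 2 / 2 * (a Mi * Di ^ 2 * Dk ^ 2 + a Mj * Dj ^ 2 * Dl ^ 2) := by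
      apply mul_le_mul_of_nonneg_left (by linarith) (by positivity)
    linarith
  calc C₂ * a N / N * (Di * Dj * Dk * Dl) = C₂ * a N * (Di * Dj * Dk * Dl) / N := by ring
  _ ≤ C₂ * C₁ ^ 2 / 2 * (a Mi * Di ^ 2 * Dk ^ 2 + a Mj * Dj ^ 2 * Dl ^ 2) / N :=
      (div_le_div_iff_of_pos_right hNpos).mpr key
  _ = C₂ * C₁ ^ 2 / 2 * (a Mi * Di ^ 2 * Dk ^ 2 / N + a Mj * Dj ^ 2 * Dl ^ 2 / N) := by ring

private noncomputable def TT (A D : ℤ → ℝ) (u v w : ℤ × ℤ × ℤ → ℤ) (p : ℤ × ℤ × ℤ) : ℝ :=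
  if |w p| ≤ |u p| then A (u p) * D (u p) ^ 2 * D (v p) ^ 2 / ((Nz p : ℤ) : ℝ) else 0

private lemma TT_nonneg {A D : ℤ → ℝ} (hA : ∀ n, 0 ≤ A n) (hD : ∀ n, 0 ≤ D n)
    (u v w : ℤ × ℤ × ℤ → ℤ) (p : ℤ × ℤ × ℤ) : 0 ≤ TT A D u v w p := by
  unfold TT
  split_ifs
  · have h1 := hA (u p)
    have h2 := hD (u p)
    have h3 := hD (v p)
    have h4 : (0 : ℝ) ≤ ((Nz p : ℤ) : ℝ) := by
      have := one_le_Nz p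
      exact_mod_cast by omega
    positivity
  · exact le_refl _

private lemma tripleSum (A D : ℤ → ℝ) (hA : ∀ n, 0 ≤ A n)
    (u v w : ℤ × ℤ × ℤ → ℤ) (hinj : Function.Injective fun p => (u p, v p, w p))
    (hu : ∀ p, |u p| ≤ Nz p) :
    ∑' p : ℤ × ℤ × ℤ, ENNReal.ofReal (TT A D u v w p) ≤
      3 * (∑' n : ℤ, ENNReal.ofReal (A n * D n ^ 2)) * (∑' n : ℤ, ENNReal.ofReal (D n ^ 2)) := by
  set g : ℤ → ℝ≥0∞ := fun n => ENNReal.ofReal (A n * D n ^ 2) with hg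
  set h : ℤ → ℝ≥0∞ := fun n => ENNReal.ofReal (D n ^ 2) with hh
  set F : ℤ × ℤ × ℤ → ℝ≥0∞ := fun q =>
    g q.1 * h q.2.1 * (if |q.2.2| ≤ |q.1| then (ENNReal.ofReal (max 1 ((|q.1| : ℤ) : ℝ)))⁻¹ else 0)
    with hF
  have hpt : ∀ p, ENNReal.ofReal (TT A D u v w p) ≤ F (u p, v p, w p) := by
    intro p
    rw [hF]
    simp only [TT]
    split_ifs with hcond
    · have hNpos : (0 : ℝ) < ((Nz p : ℤ) : ℝ) := by
        have := one_le_Nz p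
        exact_mod_cast by omega
      rw [ENNReal.ofReal_div_of_pos hNpos,
        ENNReal.ofReal_mul (mul_nonneg (hA _) (sq_nonneg _))]
      rw [div_eq_mul_inv]
      apply mul_le_mul'
      · exact le_of_eq rfl
      · apply ENNReal.inv_le_inv.mpr
        apply ENNReal.ofReal_le_ofReal
        have hmax : (max 1 |u p| : ℤ) ≤ Nz p := max_le (one_le_Nz p) (hu p)
        have : ((max 1 |u p| : ℤ) : ℝ) ≤ ((Nz p : ℤ) : ℝ) := by exact_mod_cast hmax
        calc max 1 ((|u p| : ℤ) : ℝ) = ((max 1 |u p| : ℤ) : ℝ) := by push_cast; rfl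
        _ ≤ _ := this
    · simp
  calc ∑' p : ℤ × ℤ × ℤ, ENNReal.ofReal (TT A D u v w p)
      ≤ ∑' p : ℤ × ℤ × ℤ, F ((fun p => (u p, v p, w p)) p) := ENNReal.tsum_le_tsum hpt
  _ ≤ ∑' q : ℤ × ℤ × ℤ, F q :=
      Summable.tsum_le_tsum_of_inj _ hinj (fun q _ => zero_le) (fun p => le_rfl)
        ENNReal.summable ENNReal.summable
  _ = ∑' x : ℤ, ∑' y : ℤ, ∑' z : ℤ, F (x, y, z) := by
      have e1 : ∑' q : ℤ × ℤ × ℤ, F q = ∑' x : ℤ, ∑' yz : ℤ × ℤ, F (x, yz) := by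
        rw [← ENNReal.tsum_prod (f := fun x yz => F (x, yz))]
      rw [e1]
      congr 1
      funext x
      rw [← ENNReal.tsum_prod (f := fun y z => F (x, y, z))]
  _ ≤ 3 * (∑' n : ℤ, g n) * (∑' n : ℤ, h n) := by
      have step1 : ∀ x : ℤ, ∑' y : ℤ, ∑' z : ℤ, F (x, y, z) ≤ (3 * g x) * ∑' n : ℤ, h n := by
        intro x
        have inner : ∀ y : ℤ, ∑' z : ℤ, F (x, y, z) ≤ (3 * g x) * h y := by
          intro y
          have e2 : ∀ z : ℤ, F (x, y, z) = (g x * h y) *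
              (if |z| ≤ |x| then (ENNReal.ofReal (max 1 ((|x| : ℤ) : ℝ)))⁻¹ else 0) := fun z => rfl
          rw [tsum_congr e2, ENNReal.tsum_mul_left]
          calc g x * h y * ∑' z : ℤ, (if |z| ≤ |x| then (ENNReal.ofReal (max 1 ((|x| : ℤ) : ℝ)))⁻¹ else 0)
              ≤ g x * h y * 3 := mul_le_mul_right (count_le |x| (abs_nonneg x)) _
          _ = (3 * g x) * h y := by ring
        calc ∑' y : ℤ, ∑' z : ℤ, F (x, y, z) ≤ ∑' y : ℤ, (3 * g x) * h y :=
            ENNReal.tsum_le_tsum inner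
        _ = (3 * g x) * ∑' n : ℤ, h n := ENNReal.tsum_mul_left
      calc ∑' x : ℤ, ∑' y : ℤ, ∑' z : ℤ, F (x, y, z)
          ≤ ∑' x : ℤ, (3 * g x) * ∑' n : ℤ, h n := ENNReal.tsum_le_tsum step1
      _ = (∑' x : ℤ, 3 * g x) * ∑' n : ℤ, h n := ENNReal.tsum_mul_right
      _ = 3 * (∑' n : ℤ, g n) * (∑' n : ℤ, h n) := by rw [ENNReal.tsum_mul_left]

private noncomputable def Arf (a : ℝ → ℝ) (n : ℤ) : ℝ := a ((max 1 |n| : ℤ) : ℝ)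

/-- Pointwise-in-time bound for the modified-energy correction term:
`|E₁ᵃ(f)| ≲ ‖f‖_{L²}² E₀ᵃ(f)`, where `E₀ᵃ(f) = Σₙ a(n)|f̂(n)|²` and `E₁ᵃ` is the quadrilinear
functional on `Γ₄ = {ξ₁+ξ₂+ξ₃+ξ₄=0}` with multiplier `b₄ᵃ·sgn(ξ₁₂)` satisfying
`|b₄ᵃ| ≲ a(N₁*)/N₁*` (with `N₁*` the largest frequency size; on `Γ₄` the largest two are
automatically comparable). Here `f` is described by its Fourier coefficients `c`. -/
theorem stmt15 (a : ℝ → ℝ) (ha_pos : ∀ ξ, 0 < a ξ) (ha_even : ∀ ξ, a (-ξ) = a ξ)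
    (ha_mono : MonotoneOn a (Set.Ici 0)) (C₁ : ℝ) (ha_doub : ∀ ξ : ℝ, 0 < ξ → a (2 * ξ) ≤ C₁ * a ξ)
    (b : ℝ → ℝ → ℝ → ℝ → ℂ) (C₂ : ℝ)
    (hb : ∀ ξ₁ ξ₂ ξ₃ ξ₄ : ℝ, ξ₁ + ξ₂ + ξ₃ + ξ₄ = 0 →
      ‖b ξ₁ ξ₂ ξ₃ ξ₄‖ ≤
        C₂ * a (max 1 (max |ξ₁| (max |ξ₂| (max |ξ₃| |ξ₄|)))) /
          max 1 (max |ξ₁| (max |ξ₂| (max |ξ₃| |ξ₄|)))) :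
    ∃ C > (0:ℝ), ∀ c : ℤ → ℂ,
      Summable (fun n : ℤ => ‖c n‖ ^ 2) → Summable (fun n : ℤ => a n * ‖c n‖ ^ 2) →
      ‖∑' p : ℤ × ℤ × ℤ,
          b p.1 p.2.1 p.2.2 (-(p.1 + p.2.1 + p.2.2)) *
            ((Real.sign ((p.1 : ℝ) + (p.2.1 : ℝ)) : ℝ) : ℂ) *
            c p.1 * (starRingEnd ℂ) (c (-p.2.1)) * c p.2.2 *
            (starRingEnd ℂ) (c (p.1 + p.2.1 + p.2.2))‖
        ≤ C * (∑' n : ℤ, ‖c n‖ ^ 2) * (∑' n : ℤ, a n * ‖c n‖ ^ 2) := by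
  have ha0 : 0 < a 0 := ha_pos 0
  have hC₁ : 0 ≤ C₁ := by
    by_contra hC
    push_neg at hC
    have h := ha_doub 1 one_pos
    have h2 : C₁ * a 1 < 0 := mul_neg_of_neg_of_pos hC (ha_pos 1)
    have h3 := ha_pos (2 * 1)
    linarith
  have hC₂ : 0 ≤ C₂ := by
    by_contra hC
    push_neg at hC
    have h := hb 1 1 1 (-3) (by norm_num)
    have hmax : (max 1 (max |(1:ℝ)| (max |(1:ℝ)| (max |(1:ℝ)| |(-3:ℝ)|)))) = 3 := by
      norm_num
    rw [hmax] at h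
    have h0 := norm_nonneg (b 1 1 1 (-3))
    have h1 : C₂ * a 3 < 0 := mul_neg_of_neg_of_pos hC (ha_pos 3)
    have h2 : C₂ * a 3 / 3 < 0 := by linarith
    linarith
  set κ := C₂ * C₁ ^ 2 / 2 with hκdef
  have hκ : 0 ≤ κ := by positivity
  set ra := a 1 / a 0 with hradef
  have hra0 : 0 ≤ ra := div_nonneg (ha_pos 1).le ha0.le
  have hra1 : (1:ℝ) ≤ ra :=
    (one_le_div ha0).mpr (ha_mono (Set.mem_Ici.mpr le_rfl) (Set.mem_Ici.mpr zero_le_one)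
      zero_le_one)
  refine ⟨36 * κ * ra + 1, by nlinarith, ?_⟩
  intro c hc2 hca
  set X := ∑' n : ℤ, ‖c n‖ ^ 2 with hX
  set Y := ∑' n : ℤ, a n * ‖c n‖ ^ 2 with hY
  have hX0 : 0 ≤ X := tsum_nonneg fun n => sq_nonneg _
  have hY0 : 0 ≤ Y := tsum_nonneg fun n => mul_nonneg (ha_pos _).le (sq_nonneg _)
  set D : ℤ → ℝ := fun n => ‖c n‖ with hD
  have hDnn : ∀ n, 0 ≤ D n := fun n => norm_nonneg _
  set Ar : ℤ → ℝ := Arf a with hAr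
  have hArnn : ∀ n, 0 ≤ Ar n := fun n => (ha_pos _).le
  have hTTnn : ∀ u v w p, 0 ≤ TT Ar D u v w p := fun u v w p => TT_nonneg hArnn hDnn u v w p
  set T : ℤ × ℤ × ℤ → ℂ := fun p =>
    b p.1 p.2.1 p.2.2 (-(p.1 + p.2.1 + p.2.2)) *
      ((Real.sign ((p.1 : ℝ) + (p.2.1 : ℝ)) : ℝ) : ℂ) *
      c p.1 * (starRingEnd ℂ) (c (-p.2.1)) * c p.2.2 *
      (starRingEnd ℂ) (c (p.1 + p.2.1 + p.2.2)) with hT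
  have hNr : ∀ p : ℤ × ℤ × ℤ,
      max 1 (max |(p.1 : ℝ)| (max |(p.2.1 : ℝ)|
        (max |(p.2.2 : ℝ)| |-((p.1 : ℝ) + (p.2.1 : ℝ) + (p.2.2 : ℝ))|))) = ((Nz p : ℤ) : ℝ) := by
    intro p
    rw [abs_neg]
    simp only [Nz]
    push_cast
    rfl
  have hterm0 : ∀ p : ℤ × ℤ × ℤ, ‖T p‖ ≤ C₂ * a ((Nz p : ℤ) : ℝ) / ((Nz p : ℤ) : ℝ) *
      (D (s1 p) * D (s2 p) * D (s3 p) * D (s4 p)) := by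
    intro p
    have hbb := hb (p.1 : ℝ) (p.2.1 : ℝ) (p.2.2 : ℝ) (-((p.1 : ℝ) + (p.2.1 : ℝ) + (p.2.2 : ℝ)))
      (by ring)
    rw [hNr p] at hbb
    have hsgn : ‖(((Real.sign ((p.1 : ℝ) + (p.2.1 : ℝ))) : ℝ) : ℂ)‖ ≤ 1 := by
      rcases Real.sign_apply_eq ((p.1 : ℝ) + (p.2.1 : ℝ)) with hs | hs | hs <;> rw [hs] <;>
        norm_num
    have hBnn : 0 ≤ C₂ * a ((Nz p : ℤ) : ℝ) / ((Nz p : ℤ) : ℝ) := le_trans (norm_nonneg _) hbb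
    have heq : ‖T p‖ = ‖b (p.1 : ℝ) (p.2.1 : ℝ) (p.2.2 : ℝ)
        (-((p.1 : ℝ) + (p.2.1 : ℝ) + (p.2.2 : ℝ)))‖ *
        ‖(((Real.sign ((p.1 : ℝ) + (p.2.1 : ℝ))) : ℝ) : ℂ)‖ *
        (D (s1 p) * D (s2 p) * D (s3 p) * D (s4 p)) := by
      simp only [hT, hD, s1, s2, s3, s4, norm_mul, RCLike.norm_conj]
      push_cast
      ring
    rw [heq]
    set B := ‖b (p.1 : ℝ) (p.2.1 : ℝ) (p.2.2 : ℝ)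
        (-((p.1 : ℝ) + (p.2.1 : ℝ) + (p.2.2 : ℝ)))‖ with hB
    set S := ‖(((Real.sign ((p.1 : ℝ) + (p.2.1 : ℝ))) : ℝ) : ℂ)‖ with hS
    have h1 : B * S ≤ C₂ * a ((Nz p : ℤ) : ℝ) / ((Nz p : ℤ) : ℝ) := by
      have h2 : B * S ≤ (C₂ * a ((Nz p : ℤ) : ℝ) / ((Nz p : ℤ) : ℝ)) * 1 :=
        mul_le_mul hbb hsgn (norm_nonneg _) hBnn
      linarith
    exact mul_le_mul_of_nonneg_right h1
      (mul_nonneg (mul_nonneg (mul_nonneg (hDnn _) (hDnn _)) (hDnn _)) (hDnn _))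
  set TL : Fin 12 → (ℤ × ℤ × ℤ) → ℝ := ![TT Ar D s1 s3 s4, TT Ar D s2 s4 s3, TT Ar D s1 s2 s4,
    TT Ar D s3 s4 s2, TT Ar D s1 s2 s3, TT Ar D s4 s3 s2, TT Ar D s2 s1 s4, TT Ar D s3 s4 s1,
    TT Ar D s2 s1 s3, TT Ar D s4 s3 s1, TT Ar D s3 s1 s2, TT Ar D s4 s2 s1] with hTL
  have hsumTL : ∀ p, ∑ i : Fin 12, TL i p = TT Ar D s1 s3 s4 p + TT Ar D s2 s4 s3 p +
      TT Ar D s1 s2 s4 p + TT Ar D s3 s4 s2 p + TT Ar D s1 s2 s3 p + TT Ar D s4 s3 s2 p +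
      TT Ar D s2 s1 s4 p + TT Ar D s3 s4 s1 p + TT Ar D s2 s1 s3 p + TT Ar D s4 s3 s1 p +
      TT Ar D s3 s1 s2 p + TT Ar D s4 s2 s1 p := by
    intro p
    simp only [hTL, Fin.sum_univ_succ, Fin.sum_univ_zero, Matrix.cons_val_zero,
      Matrix.cons_val_succ]
    ring
  have hTLnn : ∀ i p, 0 ≤ TL i p := by
    intro i p
    fin_cases i <;>
      simp only [hTL, Matrix.cons_val_zero, Matrix.cons_val_succ, Matrix.cons_val_one,
        Matrix.head_cons, Matrix.cons_val', Matrix.cons_val_fin_one, Matrix.empty_val'] <;>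
      exact hTTnn _ _ _ p
  have hmaster : ∀ p, ‖T p‖ ≤ κ * ∑ i : Fin 12, TL i p := by
    intro p
    have hcase := pick_pair |s1 p| |s2 p| |s3 p| |s4 p| (Nz p)
      (abs3 _ _ _ _ (rel1 p))
      (by have := abs3 _ _ _ _ (rel2 p); omega)
      (by have := abs3 _ _ _ _ (rel3 p); omega)
      (by have := abs3 _ _ _ _ (rel4 p); omega)
      (abs_nonneg _) (abs_nonneg _) (abs_nonneg _) (abs_nonneg _)
      (Nz_cases p)
    rcases hcase with hcase | hcase | hcase | hcase | hcase | hcase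
    · obtain ⟨hwa, hwb, hQ⟩ := hcase
      have hTa : TT Ar D s1 s3 s4 p =
          Ar (s1 p) * D (s1 p) ^ 2 * D (s3 p) ^ 2 / ((Nz p : ℤ) : ℝ) := by
        unfold TT; rw [if_pos hwa]
      have hTb : TT Ar D s2 s4 s3 p =
          Ar (s2 p) * D (s2 p) ^ 2 * D (s4 p) ^ 2 / ((Nz p : ℤ) : ℝ) := by
        unfold TT; rw [if_pos hwb]
      have hQ' : ((Nz p : ℤ) : ℝ) ≤ 3 ∨ (((Nz p : ℤ) : ℝ) ≤ 3 * ((max 1 |s1 p| : ℤ) : ℝ) ∧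
          ((Nz p : ℤ) : ℝ) ≤ 3 * ((max 1 |s2 p| : ℤ) : ℝ)) := by
        rcases hQ with hq | ⟨hq1, hq2⟩
        · exact Or.inl (by exact_mod_cast hq)
        · refine Or.inr ⟨?_, ?_⟩
          · exact_mod_cast le_trans hq1 (by linarith [le_max_right (1:ℤ) |s1 p|])
          · exact_mod_cast le_trans hq2 (by linarith [le_max_right (1:ℤ) |s2 p|])
      have hcore := pair_core ha_pos ha_mono hC₁ ha_doub hC₂ (N := ((Nz p : ℤ) : ℝ))
          (Mi := ((max 1 |s1 p| : ℤ) : ℝ)) (Mj := ((max 1 |s2 p| : ℤ) : ℝ))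
          (by exact_mod_cast one_le_Nz p) (by exact_mod_cast le_max_left (1:ℤ) |s1 p|)
          (by exact_mod_cast le_max_left (1:ℤ) |s2 p|) hQ'
          (Di := D (s1 p)) (Dj := D (s2 p)) (Dk := D (s3 p)) (Dl := D (s4 p))
          (hDnn _) (hDnn _) (hDnn _) (hDnn _)
      calc ‖T p‖ ≤ C₂ * a ((Nz p : ℤ) : ℝ) / ((Nz p : ℤ) : ℝ) *
            (D (s1 p) * D (s2 p) * D (s3 p) * D (s4 p)) := hterm0 p
      _ = C₂ * a ((Nz p : ℤ) : ℝ) / ((Nz p : ℤ) : ℝ) *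
            (D (s1 p) * D (s2 p) * D (s3 p) * D (s4 p)) := by ring
      _ ≤ κ * (a ((max 1 |s1 p| : ℤ) : ℝ) * D (s1 p) ^ 2 * D (s3 p) ^ 2 / ((Nz p : ℤ) : ℝ) +
            a ((max 1 |s2 p| : ℤ) : ℝ) * D (s2 p) ^ 2 * D (s4 p) ^ 2 / ((Nz p : ℤ) : ℝ)) := hcore
      _ = κ * (TT Ar D s1 s3 s4 p + TT Ar D s2 s4 s3 p) := by
          rw [hTa, hTb, hAr]; simp only [Arf]
      _ ≤ κ * (∑ i : Fin 12, TL i p) := by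
          apply mul_le_mul_of_nonneg_left _ hκ
          rw [hsumTL p]
          linarith [hTTnn s1 s3 s4 p, hTTnn s2 s4 s3 p, hTTnn s1 s2 s4 p, hTTnn s3 s4 s2 p,
            hTTnn s1 s2 s3 p, hTTnn s4 s3 s2 p, hTTnn s2 s1 s4 p, hTTnn s3 s4 s1 p,
            hTTnn s2 s1 s3 p, hTTnn s4 s3 s1 p, hTTnn s3 s1 s2 p, hTTnn s4 s2 s1 p]
    · obtain ⟨hwa, hwb, hQ⟩ := hcase
      have hTa : TT Ar D s1 s2 s4 p =
          Ar (s1 p) * D (s1 p) ^ 2 * D (s2 p) ^ 2 / ((Nz p : ℤ) : ℝ) := by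
        unfold TT; rw [if_pos hwa]
      have hTb : TT Ar D s3 s4 s2 p =
          Ar (s3 p) * D (s3 p) ^ 2 * D (s4 p) ^ 2 / ((Nz p : ℤ) : ℝ) := by
        unfold TT; rw [if_pos hwb]
      have hQ' : ((Nz p : ℤ) : ℝ) ≤ 3 ∨ (((Nz p : ℤ) : ℝ) ≤ 3 * ((max 1 |s1 p| : ℤ) : ℝ) ∧
          ((Nz p : ℤ) : ℝ) ≤ 3 * ((max 1 |s3 p| : ℤ) : ℝ)) := by
        rcases hQ with hq | ⟨hq1, hq2⟩
        · exact Or.inl (by exact_mod_cast hq)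
        · refine Or.inr ⟨?_, ?_⟩
          · exact_mod_cast le_trans hq1 (by linarith [le_max_right (1:ℤ) |s1 p|])
          · exact_mod_cast le_trans hq2 (by linarith [le_max_right (1:ℤ) |s3 p|])
      have hcore := pair_core ha_pos ha_mono hC₁ ha_doub hC₂ (N := ((Nz p : ℤ) : ℝ))
          (Mi := ((max 1 |s1 p| : ℤ) : ℝ)) (Mj := ((max 1 |s3 p| : ℤ) : ℝ))
          (by exact_mod_cast one_le_Nz p) (by exact_mod_cast le_max_left (1:ℤ) |s1 p|)
          (by exact_mod_cast le_max_left (1:ℤ) |s3 p|) hQ'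
          (Di := D (s1 p)) (Dj := D (s3 p)) (Dk := D (s2 p)) (Dl := D (s4 p))
          (hDnn _) (hDnn _) (hDnn _) (hDnn _)
      calc ‖T p‖ ≤ C₂ * a ((Nz p : ℤ) : ℝ) / ((Nz p : ℤ) : ℝ) *
            (D (s1 p) * D (s2 p) * D (s3 p) * D (s4 p)) := hterm0 p
      _ = C₂ * a ((Nz p : ℤ) : ℝ) / ((Nz p : ℤ) : ℝ) *
            (D (s1 p) * D (s3 p) * D (s2 p) * D (s4 p)) := by ring
      _ ≤ κ * (a ((max 1 |s1 p| : ℤ) : ℝ) * D (s1 p) ^ 2 * D (s2 p) ^ 2 / ((Nz p : ℤ) : ℝ) +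
            a ((max 1 |s3 p| : ℤ) : ℝ) * D (s3 p) ^ 2 * D (s4 p) ^ 2 / ((Nz p : ℤ) : ℝ)) := hcore
      _ = κ * (TT Ar D s1 s2 s4 p + TT Ar D s3 s4 s2 p) := by
          rw [hTa, hTb, hAr]; simp only [Arf]
      _ ≤ κ * (∑ i : Fin 12, TL i p) := by
          apply mul_le_mul_of_nonneg_left _ hκ
          rw [hsumTL p]
          linarith [hTTnn s1 s3 s4 p, hTTnn s2 s4 s3 p, hTTnn s1 s2 s4 p, hTTnn s3 s4 s2 p,
            hTTnn s1 s2 s3 p, hTTnn s4 s3 s2 p, hTTnn s2 s1 s4 p, hTTnn s3 s4 s1 p,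
            hTTnn s2 s1 s3 p, hTTnn s4 s3 s1 p, hTTnn s3 s1 s2 p, hTTnn s4 s2 s1 p]
    · obtain ⟨hwa, hwb, hQ⟩ := hcase
      have hTa : TT Ar D s1 s2 s3 p =
          Ar (s1 p) * D (s1 p) ^ 2 * D (s2 p) ^ 2 / ((Nz p : ℤ) : ℝ) := by
        unfold TT; rw [if_pos hwa]
      have hTb : TT Ar D s4 s3 s2 p =
          Ar (s4 p) * D (s4 p) ^ 2 * D (s3 p) ^ 2 / ((Nz p : ℤ) : ℝ) := by
        unfold TT; rw [if_pos hwb]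
      have hQ' : ((Nz p : ℤ) : ℝ) ≤ 3 ∨ (((Nz p : ℤ) : ℝ) ≤ 3 * ((max 1 |s1 p| : ℤ) : ℝ) ∧
          ((Nz p : ℤ) : ℝ) ≤ 3 * ((max 1 |s4 p| : ℤ) : ℝ)) := by
        rcases hQ with hq | ⟨hq1, hq2⟩
        · exact Or.inl (by exact_mod_cast hq)
        · refine Or.inr ⟨?_, ?_⟩
          · exact_mod_cast le_trans hq1 (by linarith [le_max_right (1:ℤ) |s1 p|])
          · exact_mod_cast le_trans hq2 (by linarith [le_max_right (1:ℤ) |s4 p|])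
      have hcore := pair_core ha_pos ha_mono hC₁ ha_doub hC₂ (N := ((Nz p : ℤ) : ℝ))
          (Mi := ((max 1 |s1 p| : ℤ) : ℝ)) (Mj := ((max 1 |s4 p| : ℤ) : ℝ))
          (by exact_mod_cast one_le_Nz p) (by exact_mod_cast le_max_left (1:ℤ) |s1 p|)
          (by exact_mod_cast le_max_left (1:ℤ) |s4 p|) hQ'
          (Di := D (s1 p)) (Dj := D (s4 p)) (Dk := D (s2 p)) (Dl := D (s3 p))
          (hDnn _) (hDnn _) (hDnn _) (hDnn _)
      calc ‖T p‖ ≤ C₂ * a ((Nz p : ℤ) : ℝ) / ((Nz p : ℤ) : ℝ) *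
            (D (s1 p) * D (s2 p) * D (s3 p) * D (s4 p)) := hterm0 p
      _ = C₂ * a ((Nz p : ℤ) : ℝ) / ((Nz p : ℤ) : ℝ) *
            (D (s1 p) * D (s4 p) * D (s2 p) * D (s3 p)) := by ring
      _ ≤ κ * (a ((max 1 |s1 p| : ℤ) : ℝ) * D (s1 p) ^ 2 * D (s2 p) ^ 2 / ((Nz p : ℤ) : ℝ) +
            a ((max 1 |s4 p| : ℤ) : ℝ) * D (s4 p) ^ 2 * D (s3 p) ^ 2 / ((Nz p : ℤ) : ℝ)) := hcore
      _ = κ * (TT Ar D s1 s2 s3 p + TT Ar D s4 s3 s2 p) := by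
          rw [hTa, hTb, hAr]; simp only [Arf]
      _ ≤ κ * (∑ i : Fin 12, TL i p) := by
          apply mul_le_mul_of_nonneg_left _ hκ
          rw [hsumTL p]
          linarith [hTTnn s1 s3 s4 p, hTTnn s2 s4 s3 p, hTTnn s1 s2 s4 p, hTTnn s3 s4 s2 p,
            hTTnn s1 s2 s3 p, hTTnn s4 s3 s2 p, hTTnn s2 s1 s4 p, hTTnn s3 s4 s1 p,
            hTTnn s2 s1 s3 p, hTTnn s4 s3 s1 p, hTTnn s3 s1 s2 p, hTTnn s4 s2 s1 p]
    · obtain ⟨hwa, hwb, hQ⟩ := hcase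
      have hTa : TT Ar D s2 s1 s4 p =
          Ar (s2 p) * D (s2 p) ^ 2 * D (s1 p) ^ 2 / ((Nz p : ℤ) : ℝ) := by
        unfold TT; rw [if_pos hwa]
      have hTb : TT Ar D s3 s4 s1 p =
          Ar (s3 p) * D (s3 p) ^ 2 * D (s4 p) ^ 2 / ((Nz p : ℤ) : ℝ) := by
        unfold TT; rw [if_pos hwb]
      have hQ' : ((Nz p : ℤ) : ℝ) ≤ 3 ∨ (((Nz p : ℤ) : ℝ) ≤ 3 * ((max 1 |s2 p| : ℤ) : ℝ) ∧
          ((Nz p : ℤ) : ℝ) ≤ 3 * ((max 1 |s3 p| : ℤ) : ℝ)) := by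
        rcases hQ with hq | ⟨hq1, hq2⟩
        · exact Or.inl (by exact_mod_cast hq)
        · refine Or.inr ⟨?_, ?_⟩
          · exact_mod_cast le_trans hq1 (by linarith [le_max_right (1:ℤ) |s2 p|])
          · exact_mod_cast le_trans hq2 (by linarith [le_max_right (1:ℤ) |s3 p|])
      have hcore := pair_core ha_pos ha_mono hC₁ ha_doub hC₂ (N := ((Nz p : ℤ) : ℝ))
          (Mi := ((max 1 |s2 p| : ℤ) : ℝ)) (Mj := ((max 1 |s3 p| : ℤ) : ℝ))
          (by exact_mod_cast one_le_Nz p) (by exact_mod_cast le_max_left (1:ℤ) |s2 p|)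
          (by exact_mod_cast le_max_left (1:ℤ) |s3 p|) hQ'
          (Di := D (s2 p)) (Dj := D (s3 p)) (Dk := D (s1 p)) (Dl := D (s4 p))
          (hDnn _) (hDnn _) (hDnn _) (hDnn _)
      calc ‖T p‖ ≤ C₂ * a ((Nz p : ℤ) : ℝ) / ((Nz p : ℤ) : ℝ) *
            (D (s1 p) * D (s2 p) * D (s3 p) * D (s4 p)) := hterm0 p
      _ = C₂ * a ((Nz p : ℤ) : ℝ) / ((Nz p : ℤ) : ℝ) *
            (D (s2 p) * D (s3 p) * D (s1 p) * D (s4 p)) := by ring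
      _ ≤ κ * (a ((max 1 |s2 p| : ℤ) : ℝ) * D (s2 p) ^ 2 * D (s1 p) ^ 2 / ((Nz p : ℤ) : ℝ) +
            a ((max 1 |s3 p| : ℤ) : ℝ) * D (s3 p) ^ 2 * D (s4 p) ^ 2 / ((Nz p : ℤ) : ℝ)) := hcore
      _ = κ * (TT Ar D s2 s1 s4 p + TT Ar D s3 s4 s1 p) := by
          rw [hTa, hTb, hAr]; simp only [Arf]
      _ ≤ κ * (∑ i : Fin 12, TL i p) := by
          apply mul_le_mul_of_nonneg_left _ hκ
          rw [hsumTL p]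
          linarith [hTTnn s1 s3 s4 p, hTTnn s2 s4 s3 p, hTTnn s1 s2 s4 p, hTTnn s3 s4 s2 p,
            hTTnn s1 s2 s3 p, hTTnn s4 s3 s2 p, hTTnn s2 s1 s4 p, hTTnn s3 s4 s1 p,
            hTTnn s2 s1 s3 p, hTTnn s4 s3 s1 p, hTTnn s3 s1 s2 p, hTTnn s4 s2 s1 p]
    · obtain ⟨hwa, hwb, hQ⟩ := hcase
      have hTa : TT Ar D s2 s1 s3 p =
          Ar (s2 p) * D (s2 p) ^ 2 * D (s1 p) ^ 2 / ((Nz p : ℤ) : ℝ) := by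
        unfold TT; rw [if_pos hwa]
      have hTb : TT Ar D s4 s3 s1 p =
          Ar (s4 p) * D (s4 p) ^ 2 * D (s3 p) ^ 2 / ((Nz p : ℤ) : ℝ) := by
        unfold TT; rw [if_pos hwb]
      have hQ' : ((Nz p : ℤ) : ℝ) ≤ 3 ∨ (((Nz p : ℤ) : ℝ) ≤ 3 * ((max 1 |s2 p| : ℤ) : ℝ) ∧
          ((Nz p : ℤ) : ℝ) ≤ 3 * ((max 1 |s4 p| : ℤ) : ℝ)) := by
        rcases hQ with hq | ⟨hq1, hq2⟩
        · exact Or.inl (by exact_mod_cast hq)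
        · refine Or.inr ⟨?_, ?_⟩
          · exact_mod_cast le_trans hq1 (by linarith [le_max_right (1:ℤ) |s2 p|])
          · exact_mod_cast le_trans hq2 (by linarith [le_max_right (1:ℤ) |s4 p|])
      have hcore := pair_core ha_pos ha_mono hC₁ ha_doub hC₂ (N := ((Nz p : ℤ) : ℝ))
          (Mi := ((max 1 |s2 p| : ℤ) : ℝ)) (Mj := ((max 1 |s4 p| : ℤ) : ℝ))
          (by exact_mod_cast one_le_Nz p) (by exact_mod_cast le_max_left (1:ℤ) |s2 p|)
          (by exact_mod_cast le_max_left (1:ℤ) |s4 p|) hQ'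
          (Di := D (s2 p)) (Dj := D (s4 p)) (Dk := D (s1 p)) (Dl := D (s3 p))
          (hDnn _) (hDnn _) (hDnn _) (hDnn _)
      calc ‖T p‖ ≤ C₂ * a ((Nz p : ℤ) : ℝ) / ((Nz p : ℤ) : ℝ) *
            (D (s1 p) * D (s2 p) * D (s3 p) * D (s4 p)) := hterm0 p
      _ = C₂ * a ((Nz p : ℤ) : ℝ) / ((Nz p : ℤ) : ℝ) *
            (D (s2 p) * D (s4 p) * D (s1 p) * D (s3 p)) := by ring
      _ ≤ κ * (a ((max 1 |s2 p| : ℤ) : ℝ) * D (s2 p) ^ 2 * D (s1 p) ^ 2 / ((Nz p : ℤ) : ℝ) +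
            a ((max 1 |s4 p| : ℤ) : ℝ) * D (s4 p) ^ 2 * D (s3 p) ^ 2 / ((Nz p : ℤ) : ℝ)) := hcore
      _ = κ * (TT Ar D s2 s1 s3 p + TT Ar D s4 s3 s1 p) := by
          rw [hTa, hTb, hAr]; simp only [Arf]
      _ ≤ κ * (∑ i : Fin 12, TL i p) := by
          apply mul_le_mul_of_nonneg_left _ hκ
          rw [hsumTL p]
          linarith [hTTnn s1 s3 s4 p, hTTnn s2 s4 s3 p, hTTnn s1 s2 s4 p, hTTnn s3 s4 s2 p,
            hTTnn s1 s2 s3 p, hTTnn s4 s3 s2 p, hTTnn s2 s1 s4 p, hTTnn s3 s4 s1 p,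
            hTTnn s2 s1 s3 p, hTTnn s4 s3 s1 p, hTTnn s3 s1 s2 p, hTTnn s4 s2 s1 p]
    · obtain ⟨hwa, hwb, hQ⟩ := hcase
      have hTa : TT Ar D s3 s1 s2 p =
          Ar (s3 p) * D (s3 p) ^ 2 * D (s1 p) ^ 2 / ((Nz p : ℤ) : ℝ) := by
        unfold TT; rw [if_pos hwa]
      have hTb : TT Ar D s4 s2 s1 p =
          Ar (s4 p) * D (s4 p) ^ 2 * D (s2 p) ^ 2 / ((Nz p : ℤ) : ℝ) := by
        unfold TT; rw [if_pos hwb]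
      have hQ' : ((Nz p : ℤ) : ℝ) ≤ 3 ∨ (((Nz p : ℤ) : ℝ) ≤ 3 * ((max 1 |s3 p| : ℤ) : ℝ) ∧
          ((Nz p : ℤ) : ℝ) ≤ 3 * ((max 1 |s4 p| : ℤ) : ℝ)) := by
        rcases hQ with hq | ⟨hq1, hq2⟩
        · exact Or.inl (by exact_mod_cast hq)
        · refine Or.inr ⟨?_, ?_⟩
          · exact_mod_cast le_trans hq1 (by linarith [le_max_right (1:ℤ) |s3 p|])
          · exact_mod_cast le_trans hq2 (by linarith [le_max_right (1:ℤ) |s4 p|])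
      have hcore := pair_core ha_pos ha_mono hC₁ ha_doub hC₂ (N := ((Nz p : ℤ) : ℝ))
          (Mi := ((max 1 |s3 p| : ℤ) : ℝ)) (Mj := ((max 1 |s4 p| : ℤ) : ℝ))
          (by exact_mod_cast one_le_Nz p) (by exact_mod_cast le_max_left (1:ℤ) |s3 p|)
          (by exact_mod_cast le_max_left (1:ℤ) |s4 p|) hQ'
          (Di := D (s3 p)) (Dj := D (s4 p)) (Dk := D (s1 p)) (Dl := D (s2 p))
          (hDnn _) (hDnn _) (hDnn _) (hDnn _)
      calc ‖T p‖ ≤ C₂ * a ((Nz p : ℤ) : ℝ) / ((Nz p : ℤ) : ℝ) *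
            (D (s1 p) * D (s2 p) * D (s3 p) * D (s4 p)) := hterm0 p
      _ = C₂ * a ((Nz p : ℤ) : ℝ) / ((Nz p : ℤ) : ℝ) *
            (D (s3 p) * D (s4 p) * D (s1 p) * D (s2 p)) := by ring
      _ ≤ κ * (a ((max 1 |s3 p| : ℤ) : ℝ) * D (s3 p) ^ 2 * D (s1 p) ^ 2 / ((Nz p : ℤ) : ℝ) +
            a ((max 1 |s4 p| : ℤ) : ℝ) * D (s4 p) ^ 2 * D (s2 p) ^ 2 / ((Nz p : ℤ) : ℝ)) := hcore
      _ = κ * (TT Ar D s3 s1 s2 p + TT Ar D s4 s2 s1 p) := by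
          rw [hTa, hTb, hAr]; simp only [Arf]
      _ ≤ κ * (∑ i : Fin 12, TL i p) := by
          apply mul_le_mul_of_nonneg_left _ hκ
          rw [hsumTL p]
          linarith [hTTnn s1 s3 s4 p, hTTnn s2 s4 s3 p, hTTnn s1 s2 s4 p, hTTnn s3 s4 s2 p,
            hTTnn s1 s2 s3 p, hTTnn s4 s3 s2 p, hTTnn s2 s1 s4 p, hTTnn s3 s4 s1 p,
            hTTnn s2 s1 s3 p, hTTnn s4 s3 s1 p, hTTnn s3 s1 s2 p, hTTnn s4 s2 s1 p]
  -- Part 2: sum the pointwise bound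
  set G := ∑' n : ℤ, ENNReal.ofReal (Ar n * D n ^ 2) with hG
  set H := ∑' n : ℤ, ENNReal.ofReal (D n ^ 2) with hH
  have htrip : ∀ i : Fin 12, ∑' p : ℤ × ℤ × ℤ, ENNReal.ofReal (TL i p) ≤ 3 * G * H := by
    intro i
    fin_cases i <;>
      simp only [hTL, Matrix.cons_val_zero, Matrix.cons_val_succ, Matrix.cons_val_one,
        Matrix.head_cons]
    · exact tripleSum Ar D hArnn _ _ _ inj134 abs_s1_le
    · exact tripleSum Ar D hArnn _ _ _ inj243 abs_s2_le
    · exact tripleSum Ar D hArnn _ _ _ inj124 abs_s1_le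
    · exact tripleSum Ar D hArnn _ _ _ inj342 abs_s3_le
    · exact tripleSum Ar D hArnn _ _ _ inj123 abs_s1_le
    · exact tripleSum Ar D hArnn _ _ _ inj432 abs_s4_le
    · exact tripleSum Ar D hArnn _ _ _ inj214 abs_s2_le
    · exact tripleSum Ar D hArnn _ _ _ inj341 abs_s3_le
    · exact tripleSum Ar D hArnn _ _ _ inj213 abs_s2_le
    · exact tripleSum Ar D hArnn _ _ _ inj431 abs_s4_le
    · exact tripleSum Ar D hArnn _ _ _ inj312 abs_s3_le
    · exact tripleSum Ar D hArnn _ _ _ inj421 abs_s4_le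
  have hGle : G ≤ ENNReal.ofReal ra * ENNReal.ofReal Y := by
    have harle : ∀ n : ℤ, Ar n * D n ^ 2 ≤ ra * (a n * ‖c n‖ ^ 2) := by
      intro n
      have hkey : Ar n ≤ ra * a n := by
        rcases eq_or_ne n 0 with h0 | h0
        · subst h0
          have h1 : Ar (0 : ℤ) = a 1 := by rw [hAr]; simp [Arf]
          rw [h1, hradef]
          have h2 : ((0 : ℤ) : ℝ) = 0 := by norm_num
          rw [h2, div_mul_cancel₀ _ (ne_of_gt ha0)]
        · have h1 : (max 1 |n| : ℤ) = |n| := max_eq_right (Int.one_le_abs h0)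
          have h2 : Ar n = a ((n : ℝ)) := by
            rw [hAr]
            simp only [Arf, h1]
            have h3 : ((|n| : ℤ) : ℝ) = |(n : ℝ)| := by push_cast; ring
            rw [h3]
            rcases abs_cases ((n : ℝ)) with ⟨h4, _⟩ | ⟨h4, _⟩
            · rw [h4]
            · rw [h4, ha_even]
          rw [h2]
          nlinarith [ha_pos ((n : ℝ))]
      have h5 := mul_le_mul_of_nonneg_right hkey (sq_nonneg (D n))
      have h6 : D n ^ 2 = ‖c n‖ ^ 2 := by rw [hD]
      nlinarith [h5, h6]
    calc G ≤ ∑' n : ℤ, ENNReal.ofReal (ra * (a n * ‖c n‖ ^ 2)) :=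
        ENNReal.tsum_le_tsum (fun n => ENNReal.ofReal_le_ofReal (harle n))
    _ = ∑' n : ℤ, ENNReal.ofReal ra * ENNReal.ofReal (a n * ‖c n‖ ^ 2) := by
        congr 1; funext n; rw [ENNReal.ofReal_mul hra0]
    _ = ENNReal.ofReal ra * ∑' n : ℤ, ENNReal.ofReal (a n * ‖c n‖ ^ 2) := ENNReal.tsum_mul_left
    _ = ENNReal.ofReal ra * ENNReal.ofReal Y := by
        rw [hY, ENNReal.ofReal_tsum_of_nonneg (fun n => mul_nonneg (ha_pos _).le (sq_nonneg _))
          hca]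
  have hHeq : H = ENNReal.ofReal X := by
    rw [hX, ENNReal.ofReal_tsum_of_nonneg (fun n => sq_nonneg _) hc2]
  have hofS : (∑' p : ℤ × ℤ × ℤ, ENNReal.ofReal ‖T p‖) ≤
      ENNReal.ofReal ((36 * κ * ra + 1) * X * Y) := by
    have step1 : ∀ p, ENNReal.ofReal ‖T p‖ ≤
        ENNReal.ofReal κ * ∑ i : Fin 12, ENNReal.ofReal (TL i p) := by
      intro p
      calc ENNReal.ofReal ‖T p‖ ≤ ENNReal.ofReal (κ * ∑ i : Fin 12, TL i p) :=
          ENNReal.ofReal_le_ofReal (hmaster p)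
      _ = ENNReal.ofReal κ * ENNReal.ofReal (∑ i : Fin 12, TL i p) := ENNReal.ofReal_mul hκ
      _ = ENNReal.ofReal κ * ∑ i : Fin 12, ENNReal.ofReal (TL i p) := by
          rw [ENNReal.ofReal_sum_of_nonneg (fun i _ => hTLnn i p)]
    calc ∑' p : ℤ × ℤ × ℤ, ENNReal.ofReal ‖T p‖
        ≤ ∑' p : ℤ × ℤ × ℤ, (ENNReal.ofReal κ * ∑ i : Fin 12, ENNReal.ofReal (TL i p)) :=
        ENNReal.tsum_le_tsum step1
    _ = ENNReal.ofReal κ * ∑' p : ℤ × ℤ × ℤ, ∑ i : Fin 12, ENNReal.ofReal (TL i p) :=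
        ENNReal.tsum_mul_left
    _ = ENNReal.ofReal κ * ∑ i : Fin 12, ∑' p : ℤ × ℤ × ℤ, ENNReal.ofReal (TL i p) := by
        rw [Summable.tsum_finsetSum (fun i _ => ENNReal.summable)]
    _ ≤ ENNReal.ofReal κ * ∑ i : Fin 12, (3 * G * H) := by
        exact mul_le_mul_right (Finset.sum_le_sum (fun i _ => htrip i)) _
    _ = ENNReal.ofReal κ * (12 * (3 * G * H)) := by
        rw [Finset.sum_const, Finset.card_univ, Fintype.card_fin, nsmul_eq_mul]
        norm_num
    _ ≤ ENNReal.ofReal κ * (12 * (3 * (ENNReal.ofReal ra * ENNReal.ofReal Y) * H)) :=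
        mul_le_mul_right (mul_le_mul_right (mul_le_mul_left (mul_le_mul_right hGle 3) H) 12) _
    _ = ENNReal.ofReal κ * (12 * (3 * (ENNReal.ofReal ra * ENNReal.ofReal Y) *
          ENNReal.ofReal X)) := by rw [hHeq]
    _ = ENNReal.ofReal 36 * ENNReal.ofReal κ * ENNReal.ofReal ra * ENNReal.ofReal X *
          ENNReal.ofReal Y := by
        rw [ENNReal.ofReal_ofNat]
        ring
    _ = ENNReal.ofReal (36 * κ * ra * X * Y) := by
        rw [ENNReal.ofReal_mul (mul_nonneg (mul_nonneg (mul_nonneg (by norm_num) hκ) hra0) hX0),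
          ENNReal.ofReal_mul (mul_nonneg (mul_nonneg (by norm_num) hκ) hra0),
          ENNReal.ofReal_mul (mul_nonneg (by norm_num) hκ),
          ENNReal.ofReal_mul (by norm_num : (0:ℝ) ≤ 36)]
    _ ≤ ENNReal.ofReal ((36 * κ * ra + 1) * X * Y) :=
        ENNReal.ofReal_le_ofReal (by nlinarith [mul_nonneg hX0 hY0])
  have hcoe : ∀ p : ℤ × ℤ × ℤ, ((‖T p‖₊ : ℝ≥0∞)) = ENNReal.ofReal ‖T p‖ :=
    fun p => (ofReal_norm (T p)).symm
  have hne : (∑' p : ℤ × ℤ × ℤ, ((‖T p‖₊ : ℝ≥0∞))) ≠ ⊤ := by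
    rw [tsum_congr hcoe]
    exact ne_top_of_le_ne_top ENNReal.ofReal_ne_top hofS
  have hsumm : Summable fun p : ℤ × ℤ × ℤ => ‖T p‖ := by
    have h1 : Summable fun p : ℤ × ℤ × ℤ => ‖T p‖₊ := ENNReal.tsum_coe_ne_top_iff_summable.mp hne
    simpa using NNReal.summable_coe.mpr h1
  have hnorm := norm_tsum_le_tsum_norm hsumm
  have h2 : ∑' p : ℤ × ℤ × ℤ, ‖T p‖ ≤ (36 * κ * ra + 1) * X * Y := by
    have h3 : ENNReal.ofReal (∑' p : ℤ × ℤ × ℤ, ‖T p‖) =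
        ∑' p : ℤ × ℤ × ℤ, ENNReal.ofReal ‖T p‖ :=
      ENNReal.ofReal_tsum_of_nonneg (fun p => norm_nonneg _) hsumm
    have h4 : ENNReal.ofReal (∑' p : ℤ × ℤ × ℤ, ‖T p‖) ≤
        ENNReal.ofReal ((36 * κ * ra + 1) * X * Y) := by rw [h3]; exact hofS
    refine (ENNReal.ofReal_le_ofReal_iff ?_).mp h4
    have h5 : (0:ℝ) ≤ 36 * κ * ra + 1 := by nlinarith
    exact mul_nonneg (mul_nonneg h5 hX0) hY0
  exact le_trans hnorm h2
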